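/- Fix d ≥ 1 and let s₀ > (d+1)/2. For infinite matrices A = (A^{[i]}_{[j]}(ℓ)) indexed by i,j ∈ ℕ, ℓ ∈ ℤ^d with 2×2 complex blocks, define the s-decay norm ‖A‖^s_{s,s} = (Σ_{ℓ∈ℤ^d, h∈ℕ} ⟨ℓ,h⟩^{2s} sup_{|i−j|=h} ‖A^{[i]}_{[j]}(ℓ)‖²)^{1/2}, where ⟨ℓ,h⟩ = max{|ℓ|, h, 1} and block products are convolved: (AB)^{[i]}_{[j]}(ℓ) = Σ_{k,ℓ'} A^{[i]}_{[k]}(ℓ−ℓ') B^{[k]}_{[j]}(ℓ'). Then for s ≥ s₀ there is C(s) with ‖AB‖^s_{s,s} ≤ C(s)(‖A‖^{s₀}_{s₀,s₀}‖B‖^s_{s,s} + ‖A‖^s_{s,s}‖B‖^{s₀}_{s₀,s₀}). -/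

import Mathlib

open scoped ENNReal NNReal

/-- Operator norm of a `2×2` complex block. -/
noncomputable def blockNorm (M : Matrix (Fin 2) (Fin 2) ℂ) : ℝ≥0∞ :=
  (‖Matrix.toEuclideanCLM (𝕜 := ℂ) M‖₊ : ℝ≥0∞)

/-- `⟨ℓ,h⟩ = max(|ℓ|, h, 1)`. -/
def wt {d : ℕ} (ℓ : Fin d → ℤ) (h : ℕ) : ℕ :=
  max (max (Finset.univ.sup fun i => (ℓ i).natAbs) h) 1

/-- The `s`-decay norm of a `θ`-dependent infinite matrix of `2×2` blocks. -/
noncomputable def sDecayNorm (d : ℕ) (s : ℝ)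
    (A : (Fin d → ℤ) → ℕ → ℕ → Matrix (Fin 2) (Fin 2) ℂ) : ℝ≥0∞ :=
  (∑' p : (Fin d → ℤ) × ℕ,
      (wt p.1 p.2 : ℝ≥0∞) ^ (2 * s) *
        ⨆ ij : {q : ℕ × ℕ // Nat.dist q.1 q.2 = p.2},
          (blockNorm (A p.1 ij.1.1 ij.1.2)) ^ 2) ^ (1/2 : ℝ)

/-- The (convolved) product of two `θ`-dependent infinite matrices. -/
noncomputable def matProd (d : ℕ)
    (A B : (Fin d → ℤ) → ℕ → ℕ → Matrix (Fin 2) (Fin 2) ℂ) :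
    (Fin d → ℤ) → ℕ → ℕ → Matrix (Fin 2) (Fin 2) ℂ :=
  fun ℓ i j => ∑' p : ℕ × (Fin d → ℤ), A (ℓ - p.2) i p.1 * B p.2 p.1 j

/-! ### Auxiliary lemmas -/

section Aux

lemma blockNorm_mul_le (M N : Matrix (Fin 2) (Fin 2) ℂ) :
    blockNorm (M * N) ≤ blockNorm M * blockNorm N := by
  unfold blockNorm
  rw [map_mul, ← ENNReal.coe_mul]
  exact ENNReal.coe_le_coe.2 (nnnorm_mul_le _ _)

lemma blockNorm_tsum_le {ι : Type*} (f : ι → Matrix (Fin 2) (Fin 2) ℂ) :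
    blockNorm (∑' i, f i) ≤ ∑' i, blockNorm (f i) := by
  by_cases h : ∑' i, blockNorm (f i) = ⊤
  · exact h ▸ le_top
  · set φ := Matrix.toEuclideanCLM (𝕜 := ℂ) (n := Fin 2) with hφ
    have hs : Summable fun i => ‖φ (f i)‖₊ := ENNReal.tsum_coe_ne_top_iff_summable.1 h
    have hgs : Summable fun i => φ (f i) := Summable.of_nnnorm hs
    have hL : Continuous (φ.symm : _ → Matrix (Fin 2) (Fin 2) ℂ) := by
      have : Continuous (({ toFun := ⇑φ.symm, map_add' := fun x y => map_add φ.symm x y, map_smul' := fun c x => map_smul φ.symm c x } : _ →ₗ[ℂ] Matrix (Fin 2) (Fin 2) ℂ)) :=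
        LinearMap.continuous_of_finiteDimensional _
      exact this
    have hf : HasSum f (φ.symm (∑' i, φ (f i))) := by
      have h2 := hgs.hasSum.map (φ.symm : _ ≃⋆ₐ[ℂ] _) hL
      have : (⇑φ.symm ∘ fun i => φ (f i)) = f := by
        funext i; simp
      rwa [this] at h2
    have heq : blockNorm (∑' i, f i) = (‖∑' i, φ (f i)‖₊ : ℝ≥0∞) := by
      rw [hf.tsum_eq]; unfold blockNorm
      rw [hφ, StarAlgEquiv.apply_symm_apply]
    rw [heq]
    calc (‖∑' i, φ (f i)‖₊ : ℝ≥0∞) ≤ (↑(∑' i, ‖φ (f i)‖₊) : ℝ≥0∞) :=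
          ENNReal.coe_le_coe.2 (nnnorm_tsum_le hs)
      _ = ∑' i, blockNorm (f i) := ENNReal.coe_tsum hs

lemma iSup_sq {ι : Sort*} [Nonempty ι] (f : ι → ℝ≥0∞) : (⨆ i, f i) ^ 2 = ⨆ i, f i ^ 2 := by
  apply le_antisymm
  · rw [sq, ENNReal.iSup_mul]
    refine iSup_le fun i => ?_
    rw [ENNReal.mul_iSup]
    refine iSup_le fun j => ?_
    rcases le_total (f i) (f j) with h | h
    · calc f i * f j ≤ f j * f j := mul_le_mul_left h _
        _ ≤ ⨆ k, f k ^ 2 := by rw [← sq]; exact le_iSup (fun k => f k ^ 2) j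
    · calc f i * f j ≤ f i * f i := mul_le_mul_right h _
        _ ≤ ⨆ k, f k ^ 2 := by rw [← sq]; exact le_iSup (fun k => f k ^ 2) i
  · exact iSup_le fun i => pow_le_pow_left' (le_iSup f i) 2

lemma tsum_mul_le_sqrt_mul_sqrt {α : Type*} [Countable α] (f g : α → ℝ≥0∞) :
    ∑' x, f x * g x ≤ (∑' x, f x ^ 2) ^ (1/2 : ℝ) * (∑' x, g x ^ 2) ^ (1/2 : ℝ) := by
  letI : MeasurableSpace α := ⊤
  haveI : MeasurableSingletonClass α := ⟨fun _ => trivial⟩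
  have h := ENNReal.lintegral_mul_le_Lp_mul_Lq (MeasureTheory.Measure.count (α := α))
    Real.HolderConjugate.two_two
    (f := f) (g := g) (Measurable.aemeasurable (by exact measurable_from_top))
    (Measurable.aemeasurable (by exact measurable_from_top))
  simp only [MeasureTheory.lintegral_count, Pi.mul_apply] at h
  calc ∑' x, f x * g x ≤ (∑' x, f x ^ (2:ℝ)) ^ (1/2:ℝ) * (∑' x, g x ^ (2:ℝ)) ^ (1/2:ℝ) := h
    _ = (∑' x, f x ^ 2) ^ (1/2 : ℝ) * (∑' x, g x ^ 2) ^ (1/2 : ℝ) := by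
        congr 1 <;> · congr 1; exact tsum_congr fun x => by rw [← ENNReal.rpow_natCast]; norm_num

lemma rpow_two_mul (x : ℝ≥0∞) (s : ℝ) : x ^ (2*s) = (x ^ s)^2 := by
  rw [mul_comm, ENNReal.rpow_mul, ← ENNReal.rpow_natCast (x ^ s) 2]; norm_num

lemma rpow_half_sq (x : ℝ≥0∞) : (x ^ (1/2:ℝ)) ^ 2 = x := by
  rw [← ENNReal.rpow_natCast (x ^ (1/2:ℝ)) 2, ← ENNReal.rpow_mul]; norm_num

lemma addSqLe4 (x y : ℝ≥0∞) : (x + y)^2 ≤ 4 * (x^2 + y^2) := by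
  have h : x + y ≤ 2 * max x y := by
    rcases le_total x y with h | h
    · simp [max_eq_right h, two_mul]; exact add_le_add h le_rfl
    · simp [max_eq_left h, two_mul]; exact add_le_add le_rfl h
  calc (x+y)^2 ≤ (2 * max x y)^2 := pow_le_pow_left' h 2
    _ = 4 * (max x y)^2 := by ring
    _ ≤ 4 * (x^2 + y^2) := by
        gcongr
        rcases le_total x y with h | h
        · rw [max_eq_right h]; exact le_add_self
        · rw [max_eq_left h]; exact le_self_add

lemma rpow_add_le2 {x y z : ℝ≥0∞} {r : ℝ} (hr : 0 ≤ r) (h : x ≤ y + z) :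
    x ^ r ≤ 2^r * (y^r + z^r) := by
  have h2 : x ≤ 2 * max y z := by
    refine le_trans h ?_
    rcases le_total y z with h' | h'
    · rw [max_eq_right h', two_mul]; exact add_le_add h' le_rfl
    · rw [max_eq_left h', two_mul]; exact add_le_add le_rfl h'
  calc x ^ r ≤ (2 * max y z) ^ r := ENNReal.rpow_le_rpow h2 hr
    _ = 2^r * (max y z)^r := ENNReal.mul_rpow_of_nonneg _ _ hr
    _ ≤ 2^r * (y^r + z^r) := by
        gcongr
        rcases le_total y z with h' | h'
        · rw [max_eq_right h']
          exact le_add_self.trans (add_le_add (ENNReal.rpow_le_rpow le_rfl hr) le_rfl)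
        · rw [max_eq_left h']
          exact le_self_add.trans (add_le_add le_rfl (ENNReal.rpow_le_rpow le_rfl hr))

lemma tsum_split_le {α : Type*} (f : α → ℝ≥0∞) (s : Set α) :
    ∑' k, f k ≤ ∑' k : s, f k + ∑' k : ↥sᶜ, f k := by
  rw [Summable.tsum_add_tsum_compl (s := s) ENNReal.summable ENNReal.summable]

lemma tsum_dist_le (j : ℕ) (f : ℕ → ℝ≥0∞) :
    ∑' k : ℕ, f (Nat.dist k j) ≤ 2 * ∑' h, f h := by
  refine le_trans (tsum_split_le _ {k | k ≤ j}) ?_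
  have h1 : ∑' k : {k | k ≤ j}, f (Nat.dist ↑k j) ≤ ∑' h, f h := by
    refine ENNReal.tsum_comp_le_tsum_of_injective (f := fun k : {k | k ≤ j} => Nat.dist ↑k j) ?_ f
    intro a b hab
    have ha : (a : ℕ) ≤ j := a.2
    have hb : (b : ℕ) ≤ j := b.2
    simp only [Nat.dist] at hab
    exact Subtype.ext (by omega)
  have h2 : ∑' k : ↥{k | k ≤ j}ᶜ, f (Nat.dist ↑k j) ≤ ∑' h, f h := by
    refine ENNReal.tsum_comp_le_tsum_of_injective (f := fun k : ↥{k | k ≤ j}ᶜ => Nat.dist ↑k j) ?_ f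
    intro a b hab
    have ha : ¬ ((a : ℕ) ≤ j) := a.2
    have hb : ¬ ((b : ℕ) ≤ j) := b.2
    simp only [Nat.dist] at hab
    exact Subtype.ext (by omega)
  calc _ ≤ ∑' h, f h + ∑' h, f h := add_le_add h1 h2
    _ = 2 * ∑' h, f h := (two_mul _).symm

def Sh (h : ℕ) : Set (ℕ × ℕ) := {p | p.1 + p.2 = h ∨ Nat.dist p.1 p.2 = h}

lemma sup_conv (i j : ℕ) (f g : ℕ → ℝ≥0∞) :
    ∑' k : ℕ, f (Nat.dist i k) * g (Nat.dist k j) ≤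
      2 * ∑' p : Sh (Nat.dist i j), f (p : ℕ × ℕ).1 * g (p : ℕ × ℕ).2 := by
  have mem : ∀ k : ℕ, ((Nat.dist i k, Nat.dist k j) : ℕ × ℕ) ∈ Sh (Nat.dist i j) := by
    intro k; simp only [Sh, Set.mem_setOf_eq, Nat.dist]; omega
  refine le_trans (tsum_split_le _ {k | k ≤ i}) ?_
  have h1 : ∑' k : {k | k ≤ i}, f (Nat.dist i ↑k) * g (Nat.dist ↑k j) ≤
      ∑' p : Sh (Nat.dist i j), f (p : ℕ × ℕ).1 * g (p : ℕ × ℕ).2 := by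
    refine ENNReal.tsum_comp_le_tsum_of_injective
      (f := fun k : {k | k ≤ i} => (⟨(Nat.dist i ↑k, Nat.dist ↑k j), mem ↑k⟩ : Sh (Nat.dist i j)))
      ?_ (fun p => f (p : ℕ × ℕ).1 * g (p : ℕ × ℕ).2)
    intro a b hab
    have ha : (a : ℕ) ≤ i := a.2
    have hb : (b : ℕ) ≤ i := b.2
    simp only [Subtype.mk.injEq, Prod.mk.injEq, Nat.dist] at hab
    exact Subtype.ext (by omega)
  have h2 : ∑' k : ↥{k | k ≤ i}ᶜ, f (Nat.dist i ↑k) * g (Nat.dist ↑k j) ≤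
      ∑' p : Sh (Nat.dist i j), f (p : ℕ × ℕ).1 * g (p : ℕ × ℕ).2 := by
    refine ENNReal.tsum_comp_le_tsum_of_injective
      (f := fun k : ↥{k | k ≤ i}ᶜ => (⟨(Nat.dist i ↑k, Nat.dist ↑k j), mem ↑k⟩ : Sh (Nat.dist i j)))
      ?_ (fun p => f (p : ℕ × ℕ).1 * g (p : ℕ × ℕ).2)
    intro a b hab
    have ha : ¬ ((a : ℕ) ≤ i) := a.2
    have hb : ¬ ((b : ℕ) ≤ i) := b.2
    simp only [Subtype.mk.injEq, Prod.mk.injEq, Nat.dist] at hab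
    exact Subtype.ext (by omega)
  calc _ ≤ _ := add_le_add h1 h2
    _ = 2 * _ := (two_mul _).symm

lemma tsum_Sh_le (u v : ℕ → ℝ≥0∞) :
    ∑' (h : ℕ) (p : Sh h), u (p : ℕ × ℕ).1 * v (p : ℕ × ℕ).2 ≤
      2 * ((∑' h, u h) * (∑' h, v h)) := by
  rw [← ENNReal.tsum_sigma (fun h (p : Sh h) => u (p : ℕ × ℕ).1 * v (p : ℕ × ℕ).2)]
  have key : ∑' (x : Σ h, Sh h), u (x.2 : ℕ × ℕ).1 * v (x.2 : ℕ × ℕ).2 ≤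
      ∑' (q : (ℕ × ℕ) × Bool), u q.1.1 * v q.1.2 := by
    refine ENNReal.tsum_comp_le_tsum_of_injective
      (f := fun x : Σ h, Sh h => (((x.2 : ℕ × ℕ)), decide (x.1 = (x.2 : ℕ × ℕ).1 + (x.2 : ℕ × ℕ).2)))
      ?_ (fun q => u q.1.1 * v q.1.2)
    rintro ⟨h, ⟨p, hp⟩⟩ ⟨h', ⟨p', hp'⟩⟩ e
    simp only [Prod.mk.injEq] at e
    obtain ⟨rfl, e2⟩ := e
    simp only [decide_eq_decide] at e2
    have hh : h = h' := by
      simp only [Sh, Set.mem_setOf_eq, Nat.dist] at hp hp'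
      by_cases hc : h = p.1 + p.2
      · have := e2.mp hc; omega
      · have hc' : ¬ h' = p.1 + p.2 := fun w => hc (e2.mpr w)
        omega
    cases hh; rfl
  refine le_trans key (le_of_eq ?_)
  rw [ENNReal.tsum_prod (f := fun (a : ℕ × ℕ) (_ : Bool) => u a.1 * v a.2)]
  have step1 : ∀ a : ℕ × ℕ, ∑' (_ : Bool), u a.1 * v a.2 = 2 * (u a.1 * v a.2) := by
    intro a; rw [tsum_bool]; ring
  rw [tsum_congr step1, ENNReal.tsum_mul_left]
  congr 1
  rw [ENNReal.tsum_prod (f := fun a b => u a * v b)]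
  have step2 : ∀ a : ℕ, ∑' b, u a * v b = u a * ∑' h, v h := fun a => ENNReal.tsum_mul_left
  rw [tsum_congr step2, ENNReal.tsum_mul_right]

noncomputable def oneDim (t : ℝ) : ℝ≥0∞ := ∑' h : ℕ, (((max h 1 : ℕ) : ℝ≥0∞) ^ t)⁻¹

lemma oneDim_ne_top {t : ℝ} (ht : 1 < t) : oneDim t ≠ ⊤ := by
  set c : ℕ → ℝ≥0 := fun h => (((max h 1 : ℕ) : ℝ≥0) ^ t)⁻¹ with hc
  have key : ∀ h : ℕ, (((max h 1 : ℕ) : ℝ≥0∞) ^ t)⁻¹ = ((c h : ℝ≥0) : ℝ≥0∞) := by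
    intro h
    have h0 : ((max h 1 : ℕ) : ℝ≥0) ≠ 0 := by
      simp only [ne_eq, Nat.cast_eq_zero]; omega
    rw [hc]
    show _ = ((((((max h 1 : ℕ) : ℝ≥0)) ^ t)⁻¹ : ℝ≥0) : ℝ≥0∞)
    rw [ENNReal.coe_inv (NNReal.rpow_pos (pos_iff_ne_zero.2 h0)).ne', ENNReal.coe_rpow_of_ne_zero h0,
      ENNReal.coe_natCast]
  rw [oneDim, tsum_congr key]
  refine ENNReal.tsum_coe_ne_top_iff_summable.2 ?_
  rw [← NNReal.summable_coe]
  have hr : ∀ h : ℕ, ((c h : ℝ)) = (((max h 1 : ℕ) : ℝ) ^ t)⁻¹ := by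
    intro h
    rw [hc]
    show ((((((max h 1 : ℕ) : ℝ≥0)) ^ t)⁻¹ : ℝ≥0) : ℝ) = _
    rw [NNReal.coe_inv, NNReal.coe_rpow, NNReal.coe_natCast]
  have base : Summable fun n : ℕ => 1 / (n : ℝ) ^ t := Real.summable_one_div_nat_rpow.2 ht
  have shifted : Summable fun n : ℕ => 1 / ((n + 1 : ℕ) : ℝ) ^ t := by
    exact_mod_cast (summable_nat_add_iff 1).2 base
  refine (summable_nat_add_iff 1).1 ?_
  refine shifted.congr fun n => ?_
  rw [hr (n + 1)]
  have : max (n + 1) 1 = n + 1 := by omega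
  rw [this, one_div]

lemma tsum_int_natAbs_le (f : ℕ → ℝ≥0∞) :
    ∑' m : ℤ, f m.natAbs ≤ 2 * ∑' n, f n := by
  have split : ∑' m : ℤ, f m.natAbs ≤
      ∑' m : {m : ℤ | 0 ≤ m}, f (m : ℤ).natAbs + ∑' m : ↥{m : ℤ | 0 ≤ m}ᶜ, f (m : ℤ).natAbs :=
    le_of_eq (Summable.tsum_add_tsum_compl (s := {m : ℤ | 0 ≤ m}) ENNReal.summable ENNReal.summable).symm
  refine le_trans split ?_
  have h1 : ∑' m : {m : ℤ | 0 ≤ m}, f (m : ℤ).natAbs ≤ ∑' n, f n := by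
    refine ENNReal.tsum_comp_le_tsum_of_injective
      (f := fun m : {m : ℤ | 0 ≤ m} => (m : ℤ).natAbs) ?_ f
    intro a b hab
    have ha : (0 : ℤ) ≤ a := a.2
    have hb : (0 : ℤ) ≤ b := b.2
    dsimp only at hab
    exact Subtype.ext (by omega)
  have h2 : ∑' m : ↥{m : ℤ | 0 ≤ m}ᶜ, f (m : ℤ).natAbs ≤ ∑' n, f n := by
    refine ENNReal.tsum_comp_le_tsum_of_injective
      (f := fun m : ↥{m : ℤ | 0 ≤ m}ᶜ => (m : ℤ).natAbs) ?_ f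
    intro a b hab
    have ha : ¬ ((0 : ℤ) ≤ a) := a.2
    have hb : ¬ ((0 : ℤ) ≤ b) := b.2
    dsimp only at hab
    exact Subtype.ext (by omega)
  calc _ ≤ ∑' n, f n + ∑' n, f n := add_le_add h1 h2
    _ = 2 * ∑' n, f n := (two_mul _).symm

lemma tsum_pi_prod (g : ℤ → ℝ≥0∞) :
    ∀ d : ℕ, ∑' ℓ : Fin d → ℤ, ∏ i, g (ℓ i) = (∑' m, g m) ^ d := by
  intro d
  induction d with
  | zero =>
    simp only [Finset.univ_eq_empty, Finset.prod_empty, pow_zero]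
    rw [tsum_eq_single (default : Fin 0 → ℤ) (fun b hb => (hb (Subsingleton.elim b default)).elim)]
  | succ n ih =>
    rw [← (Fin.consEquiv (fun _ : Fin (n+1) => ℤ)).tsum_eq (fun ℓ => ∏ i, g (ℓ i))]
    have step : ∀ x : ℤ × (Fin n → ℤ),
        (∏ i, g (((Fin.consEquiv (fun _ : Fin (n+1) => ℤ)) x) i)) = g x.1 * ∏ i, g (x.2 i) := by
      intro x
      rw [Fin.prod_univ_succ]
      simp [Fin.consEquiv]
    rw [tsum_congr step, ENNReal.tsum_prod (f := fun (m : ℤ) (ℓ : Fin n → ℤ) => g m * ∏ i, g (ℓ i))]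
    have : ∀ m : ℤ, ∑' ℓ : Fin n → ℤ, g m * ∏ i, g (ℓ i) = g m * (∑' m', g m') ^ n := by
      intro m; rw [ENNReal.tsum_mul_left, ih]
    rw [tsum_congr this, ENNReal.tsum_mul_right, pow_succ, mul_comm]

lemma K_ne_top (d : ℕ) {s₀ : ℝ} (hs₀ : ((d : ℝ) + 1) / 2 < s₀) :
    ∑' p : (Fin d → ℤ) × ℕ, (((wt p.1 p.2 : ℕ) : ℝ≥0∞) ^ (2 * s₀))⁻¹ ≠ ⊤ := by
  have hd1 : (0 : ℝ) < (d : ℝ) + 1 := by positivity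
  set t : ℝ := 2 * s₀ / ((d : ℝ) + 1) with htdef
  have ht : 1 < t := by rw [htdef]; rw [lt_div_iff₀ hd1]; linarith
  have ht0 : 0 ≤ t := by linarith
  have htd : t * ((d : ℕ) + 1 : ℕ) = 2 * s₀ := by
    push_cast; rw [htdef]; field_simp
  set g : ℤ → ℝ≥0∞ := fun m => (((max m.natAbs 1 : ℕ) : ℝ≥0∞) ^ t)⁻¹ with hg
  set v : ℕ → ℝ≥0∞ := fun h => (((max h 1 : ℕ) : ℝ≥0∞) ^ t)⁻¹ with hv
  have pointwise : ∀ p : (Fin d → ℤ) × ℕ,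
      (((wt p.1 p.2 : ℕ) : ℝ≥0∞) ^ (2 * s₀))⁻¹ ≤ (∏ i, g (p.1 i)) * v p.2 := by
    rintro ⟨ℓ, h⟩
    set W : ℝ≥0∞ := ((wt ℓ h : ℕ) : ℝ≥0∞) with hW
    have hW1 : (1 : ℝ≥0∞) ≤ W := by
      rw [hW]; exact_mod_cast Nat.one_le_iff_ne_zero.2 (by simp [wt])
    have hWtop : W ≠ ⊤ := by rw [hW]; exact ENNReal.natCast_ne_top _
    have hW0 : W ≠ 0 := by intro h0; rw [h0] at hW1; simp at hW1
    have hfac : ∀ i : Fin d, ((max (ℓ i).natAbs 1 : ℕ) : ℝ≥0∞) ≤ W := by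
      intro i
      rw [hW]
      have : (ℓ i).natAbs ≤ Finset.univ.sup fun i => (ℓ i).natAbs :=
        Finset.le_sup (f := fun i => (ℓ i).natAbs) (Finset.mem_univ i)
      exact_mod_cast (by simp only [wt]; omega : max (ℓ i).natAbs 1 ≤ wt ℓ h)
    have hfach : ((max h 1 : ℕ) : ℝ≥0∞) ≤ W := by
      rw [hW]
      exact_mod_cast (by simp only [wt]; omega : max h 1 ≤ wt ℓ h)
    have prodbound : (∏ i, ((max ((ℓ i)).natAbs 1 : ℕ) : ℝ≥0∞) ^ t) *
        ((max h 1 : ℕ) : ℝ≥0∞) ^ t ≤ W ^ (2 * s₀) := by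
      calc (∏ i, ((max ((ℓ i)).natAbs 1 : ℕ) : ℝ≥0∞) ^ t) * ((max h 1 : ℕ) : ℝ≥0∞) ^ t
          ≤ (∏ _i : Fin d, W ^ t) * W ^ t := by
            refine mul_le_mul' (Finset.prod_le_prod' fun i _ => ?_)
              (ENNReal.rpow_le_rpow hfach ht0)
            exact ENNReal.rpow_le_rpow (hfac i) ht0
        _ = (W ^ t) ^ (d : ℕ) * W ^ t := by
            rw [Finset.prod_const, Finset.card_univ, Fintype.card_fin]
        _ = W ^ (t * (d : ℕ)) * W ^ t := by
            rw [← ENNReal.rpow_natCast (W ^ t) d, ← ENNReal.rpow_mul]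
        _ = W ^ (t * (d : ℕ) + t) := (ENNReal.rpow_add _ _ hW0 hWtop).symm
        _ = W ^ (2 * s₀) := by rw [← htd]; push_cast; ring_nf
    have dist1 : (∏ i, g (ℓ i)) * v h =
        ((∏ i, ((max ((ℓ i)).natAbs 1 : ℕ) : ℝ≥0∞) ^ t) * ((max h 1 : ℕ) : ℝ≥0∞) ^ t)⁻¹ := by
      rw [ENNReal.mul_inv, ENNReal.prod_inv_distrib]
      · refine Set.Pairwise.mono (Set.subset_univ _) ?_
        intro i _ j _ _
        exact Or.inr (ENNReal.rpow_ne_top_of_nonneg ht0 (ENNReal.natCast_ne_top _))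
      · exact Or.inr (ENNReal.rpow_ne_top_of_nonneg ht0 (ENNReal.natCast_ne_top _))
      · refine Or.inl (ENNReal.prod_lt_top fun i _ => ?_).ne
        exact lt_top_iff_ne_top.2 (ENNReal.rpow_ne_top_of_nonneg ht0 (ENNReal.natCast_ne_top _))
    rw [dist1]
    exact ENNReal.inv_le_inv.2 prodbound
  refine ne_top_of_le_ne_top ?_ (ENNReal.tsum_le_tsum pointwise)
  have factor : ∑' p : (Fin d → ℤ) × ℕ, (∏ i, g (p.1 i)) * v p.2 =
      (∑' ℓ : Fin d → ℤ, ∏ i, g (ℓ i)) * ∑' h, v h := by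
    rw [ENNReal.tsum_prod (f := fun (ℓ : Fin d → ℤ) (h : ℕ) => (∏ i, g (ℓ i)) * v h)]
    have : ∀ ℓ : Fin d → ℤ, ∑' h, (∏ i, g (ℓ i)) * v h = (∏ i, g (ℓ i)) * ∑' h, v h :=
      fun ℓ => ENNReal.tsum_mul_left
    rw [tsum_congr this, ENNReal.tsum_mul_right]
  rw [factor, tsum_pi_prod g d]
  have hone : (∑' h, v h) ≠ ⊤ := oneDim_ne_top ht
  have hint : (∑' m, g m) ≠ ⊤ := by
    refine ne_top_of_le_ne_top ?_ (tsum_int_natAbs_le (fun n => v n))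
    exact ENNReal.mul_ne_top (by simp) hone
  exact ENNReal.mul_ne_top (ENNReal.pow_ne_top hint) hone

/-! ### Structures tied to the decay norm -/

noncomputable def wE (d : ℕ) (p : (Fin d → ℤ) × ℕ) : ℝ≥0∞ := ((wt p.1 p.2 : ℕ) : ℝ≥0∞)

instance distSubtypeNonempty (h : ℕ) : Nonempty {q : ℕ × ℕ // Nat.dist q.1 q.2 = h} :=
  ⟨⟨(h, 0), by simp [Nat.dist]⟩⟩

noncomputable def supN (d : ℕ) (A : (Fin d → ℤ) → ℕ → ℕ → Matrix (Fin 2) (Fin 2) ℂ)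
    (p : (Fin d → ℤ) × ℕ) : ℝ≥0∞ :=
  ⨆ ij : {q : ℕ × ℕ // Nat.dist q.1 q.2 = p.2}, blockNorm (A p.1 ij.1.1 ij.1.2)

lemma wE_one_le (d : ℕ) (p : (Fin d → ℤ) × ℕ) : (1 : ℝ≥0∞) ≤ wE d p := by
  rw [wE]; exact_mod_cast Nat.one_le_iff_ne_zero.2 (by simp [wt])

lemma wE_ne_zero (d : ℕ) (p : (Fin d → ℤ) × ℕ) : wE d p ≠ 0 :=
  fun h0 => by have := wE_one_le d p; rw [h0] at this; simp at this

lemma wE_ne_top (d : ℕ) (p : (Fin d → ℤ) × ℕ) : wE d p ≠ ⊤ := ENNReal.natCast_ne_top _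

lemma sDecay_eq (d : ℕ) (r : ℝ) (A : (Fin d → ℤ) → ℕ → ℕ → Matrix (Fin 2) (Fin 2) ℂ) :
    sDecayNorm d r A = (∑' p : (Fin d → ℤ) × ℕ, (wE d p ^ r * supN d A p)^2) ^ (1/2 : ℝ) := by
  rw [sDecayNorm]
  congr 1
  refine tsum_congr fun p => ?_
  rw [mul_pow, ← rpow_two_mul, supN, ← iSup_sq]
  rfl

lemma sqN_eq (d : ℕ) (r : ℝ) (A : (Fin d → ℤ) → ℕ → ℕ → Matrix (Fin 2) (Fin 2) ℂ) :
    ∑' p : (Fin d → ℤ) × ℕ, (wE d p ^ r * supN d A p)^2 = sDecayNorm d r A ^ 2 := by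
  rw [sDecay_eq, rpow_half_sq]

lemma wt_tri {d : ℕ} (ℓ ℓ' : Fin d → ℤ) (i k j : ℕ) :
    wt ℓ (Nat.dist i j) ≤ wt (ℓ - ℓ') (Nat.dist i k) + wt ℓ' (Nat.dist k j) := by
  have hsup : (Finset.univ.sup fun i' => (ℓ i').natAbs) ≤
      (Finset.univ.sup fun i' => ((ℓ - ℓ') i').natAbs) +
      (Finset.univ.sup fun i' => (ℓ' i').natAbs) := by
    refine Finset.sup_le fun i' _ => ?_
    have he : ℓ i' = (ℓ - ℓ') i' + ℓ' i' := by simp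
    calc (ℓ i').natAbs = ((ℓ - ℓ') i' + ℓ' i').natAbs := by rw [← he]
      _ ≤ ((ℓ - ℓ') i').natAbs + (ℓ' i').natAbs := Int.natAbs_add_le _ _
      _ ≤ _ := add_le_add
          (Finset.le_sup (f := fun i' => ((ℓ - ℓ') i').natAbs) (Finset.mem_univ i'))
          (Finset.le_sup (f := fun i' => (ℓ' i').natAbs) (Finset.mem_univ i'))
  have hdist : Nat.dist i j ≤ Nat.dist i k + Nat.dist k j := by
    simp only [Nat.dist]; omega
  simp only [wt]; omega

lemma wsum1 (d : ℕ) (r : ℝ) (j : ℕ) :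
    ∑' q : ℕ × (Fin d → ℤ), ((wE d (q.2, Nat.dist q.1 j)) ^ r)⁻¹ ≤
      2 * ∑' p : (Fin d → ℤ) × ℕ, ((wE d p) ^ r)⁻¹ := by
  rw [ENNReal.tsum_prod (f := fun (k : ℕ) (ℓ' : Fin d → ℤ) => ((wE d (ℓ', Nat.dist k j)) ^ r)⁻¹),
    ENNReal.tsum_comm]
  calc ∑' (ℓ' : Fin d → ℤ) (k : ℕ), ((wE d (ℓ', Nat.dist k j)) ^ r)⁻¹
      ≤ ∑' (ℓ' : Fin d → ℤ), 2 * ∑' h : ℕ, ((wE d (ℓ', h)) ^ r)⁻¹ :=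
        ENNReal.tsum_le_tsum fun ℓ' => tsum_dist_le j (fun h => ((wE d (ℓ', h)) ^ r)⁻¹)
    _ = 2 * ∑' (ℓ' : Fin d → ℤ) (h : ℕ), ((wE d (ℓ', h)) ^ r)⁻¹ := ENNReal.tsum_mul_left
    _ = 2 * ∑' p : (Fin d → ℤ) × ℕ, ((wE d p) ^ r)⁻¹ := by
        rw [ENNReal.tsum_prod (f := fun (ℓ' : Fin d → ℤ) (h : ℕ) => ((wE d (ℓ', h)) ^ r)⁻¹)]

lemma wsum2 (d : ℕ) (r : ℝ) (i : ℕ) (ℓ : Fin d → ℤ) :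
    ∑' q : ℕ × (Fin d → ℤ), ((wE d (ℓ - q.2, Nat.dist i q.1)) ^ r)⁻¹ ≤
      2 * ∑' p : (Fin d → ℤ) × ℕ, ((wE d p) ^ r)⁻¹ := by
  rw [ENNReal.tsum_prod (f := fun (k : ℕ) (ℓ' : Fin d → ℤ) => ((wE d (ℓ - ℓ', Nat.dist i k)) ^ r)⁻¹),
    ENNReal.tsum_comm]
  have subst1 : ∀ ℓ' : Fin d → ℤ, ∑' k : ℕ, ((wE d (ℓ - ℓ', Nat.dist i k)) ^ r)⁻¹ =
      ∑' k : ℕ, ((wE d (ℓ - ℓ', Nat.dist k i)) ^ r)⁻¹ := by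
    intro ℓ'; exact tsum_congr fun k => by rw [Nat.dist_comm]
  calc ∑' (ℓ' : Fin d → ℤ) (k : ℕ), ((wE d (ℓ - ℓ', Nat.dist i k)) ^ r)⁻¹
      ≤ ∑' (ℓ' : Fin d → ℤ), 2 * ∑' h : ℕ, ((wE d (ℓ - ℓ', h)) ^ r)⁻¹ := by
        refine ENNReal.tsum_le_tsum fun ℓ' => ?_
        rw [subst1 ℓ']
        exact tsum_dist_le i (fun h => ((wE d (ℓ - ℓ', h)) ^ r)⁻¹)
    _ = 2 * ∑' (ℓ' : Fin d → ℤ) (h : ℕ), ((wE d (ℓ - ℓ', h)) ^ r)⁻¹ := ENNReal.tsum_mul_left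
    _ = 2 * ∑' (m : Fin d → ℤ) (h : ℕ), ((wE d (m, h)) ^ r)⁻¹ := by
        congr 1
        exact (Equiv.subLeft ℓ).tsum_eq (fun m => ∑' h : ℕ, ((wE d (m, h)) ^ r)⁻¹)
    _ = 2 * ∑' p : (Fin d → ℤ) × ℕ, ((wE d p) ^ r)⁻¹ := by
        rw [ENNReal.tsum_prod (f := fun (m : Fin d → ℤ) (h : ℕ) => ((wE d (m, h)) ^ r)⁻¹)]

lemma conv_sum_le (d : ℕ) (F' G' : (Fin d → ℤ) × ℕ → ℝ≥0∞) :
    ∑' p : (Fin d → ℤ) × ℕ, ⨆ ij : {q : ℕ × ℕ // Nat.dist q.1 q.2 = p.2},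
        ∑' q : ℕ × (Fin d → ℤ),
          (F' (p.1 - q.2, Nat.dist ij.1.1 q.1) * G' (q.2, Nat.dist q.1 ij.1.2))^2 ≤
      4 * ((∑' p : (Fin d → ℤ) × ℕ, F' p ^ 2) * (∑' p : (Fin d → ℤ) × ℕ, G' p ^ 2)) := by
  have inner : ∀ (ℓ : Fin d → ℤ) (h : ℕ),
      (⨆ ij : {q : ℕ × ℕ // Nat.dist q.1 q.2 = h},
        ∑' q : ℕ × (Fin d → ℤ),
          (F' (ℓ - q.2, Nat.dist ij.1.1 q.1) * G' (q.2, Nat.dist q.1 ij.1.2))^2) ≤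
      ∑' ℓ' : Fin d → ℤ, 2 * ∑' rr : Sh h,
          F' (ℓ - ℓ', (rr : ℕ × ℕ).1)^2 * G' (ℓ', (rr : ℕ × ℕ).2)^2 := by
    intro ℓ h
    refine iSup_le ?_
    rintro ⟨⟨i, j⟩, hij⟩
    have swap : ∑' q : ℕ × (Fin d → ℤ),
        (F' (ℓ - q.2, Nat.dist i q.1) * G' (q.2, Nat.dist q.1 j))^2 =
        ∑' (ℓ' : Fin d → ℤ) (k : ℕ),
          F' (ℓ - ℓ', Nat.dist i k)^2 * G' (ℓ', Nat.dist k j)^2 := by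
      rw [ENNReal.tsum_prod (f := fun (k : ℕ) (ℓ' : Fin d → ℤ) =>
        (F' (ℓ - ℓ', Nat.dist i k) * G' (ℓ', Nat.dist k j))^2), ENNReal.tsum_comm]
      exact tsum_congr fun ℓ' => tsum_congr fun k => mul_pow _ _ 2
    dsimp only
    rw [swap]
    refine ENNReal.tsum_le_tsum fun ℓ' => ?_
    have := sup_conv i j (fun h₁ => F' (ℓ - ℓ', h₁)^2) (fun h₂ => G' (ℓ', h₂)^2)
    rwa [hij] at this
  calc ∑' p : (Fin d → ℤ) × ℕ, ⨆ ij : {q : ℕ × ℕ // Nat.dist q.1 q.2 = p.2},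
        ∑' q : ℕ × (Fin d → ℤ),
          (F' (p.1 - q.2, Nat.dist ij.1.1 q.1) * G' (q.2, Nat.dist q.1 ij.1.2))^2
      = ∑' (ℓ : Fin d → ℤ) (h : ℕ), ⨆ ij : {q : ℕ × ℕ // Nat.dist q.1 q.2 = h},
          ∑' q : ℕ × (Fin d → ℤ),
            (F' (ℓ - q.2, Nat.dist ij.1.1 q.1) * G' (q.2, Nat.dist q.1 ij.1.2))^2 := by
        rw [ENNReal.tsum_prod (f := fun (ℓ : Fin d → ℤ) (h : ℕ) =>
          ⨆ ij : {q : ℕ × ℕ // Nat.dist q.1 q.2 = h},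
            ∑' q : ℕ × (Fin d → ℤ),
              (F' (ℓ - q.2, Nat.dist ij.1.1 q.1) * G' (q.2, Nat.dist q.1 ij.1.2))^2)]
    _ ≤ ∑' (ℓ : Fin d → ℤ) (h : ℕ) (ℓ' : Fin d → ℤ), 2 * ∑' rr : Sh h,
          F' (ℓ - ℓ', (rr : ℕ × ℕ).1)^2 * G' (ℓ', (rr : ℕ × ℕ).2)^2 :=
        ENNReal.tsum_le_tsum fun ℓ => ENNReal.tsum_le_tsum fun h => inner ℓ h
    _ = ∑' (ℓ : Fin d → ℤ) (ℓ' : Fin d → ℤ), 2 * ∑' (h : ℕ) (rr : Sh h),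
          F' (ℓ - ℓ', (rr : ℕ × ℕ).1)^2 * G' (ℓ', (rr : ℕ × ℕ).2)^2 := by
        refine tsum_congr fun ℓ => ?_
        rw [ENNReal.tsum_comm (f := fun (h : ℕ) (ℓ' : Fin d → ℤ) => 2 * ∑' rr : Sh h,
          F' (ℓ - ℓ', (rr : ℕ × ℕ).1)^2 * G' (ℓ', (rr : ℕ × ℕ).2)^2)]
        exact tsum_congr fun ℓ' => ENNReal.tsum_mul_left.symm ▸ ENNReal.tsum_mul_left
    _ ≤ ∑' (ℓ : Fin d → ℤ) (ℓ' : Fin d → ℤ),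
          2 * (2 * ((∑' h₁, F' (ℓ - ℓ', h₁)^2) * (∑' h₂, G' (ℓ', h₂)^2))) := by
        refine ENNReal.tsum_le_tsum fun ℓ => ENNReal.tsum_le_tsum fun ℓ' => ?_
        exact mul_le_mul_right (tsum_Sh_le (fun h₁ => F' (ℓ - ℓ', h₁)^2)
          (fun h₂ => G' (ℓ', h₂)^2)) 2
    _ = 4 * ∑' (ℓ : Fin d → ℤ) (ℓ' : Fin d → ℤ),
          ((∑' h₁, F' (ℓ - ℓ', h₁)^2) * (∑' h₂, G' (ℓ', h₂)^2)) := by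
        rw [← ENNReal.tsum_mul_left]
        refine tsum_congr fun ℓ => ?_
        rw [← ENNReal.tsum_mul_left]
        exact tsum_congr fun ℓ' => by ring
    _ = 4 * ((∑' p : (Fin d → ℤ) × ℕ, F' p ^ 2) * (∑' p : (Fin d → ℤ) × ℕ, G' p ^ 2)) := by
        congr 1
        calc ∑' (ℓ : Fin d → ℤ) (ℓ' : Fin d → ℤ),
              ((∑' h₁, F' (ℓ - ℓ', h₁)^2) * (∑' h₂, G' (ℓ', h₂)^2))
            = ∑' (ℓ' : Fin d → ℤ) (ℓ : Fin d → ℤ),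
              ((∑' h₁, F' (ℓ - ℓ', h₁)^2) * (∑' h₂, G' (ℓ', h₂)^2)) := ENNReal.tsum_comm
          _ = ∑' (ℓ' : Fin d → ℤ), (∑' (m : Fin d → ℤ), ∑' h₁, F' (m, h₁)^2) *
                (∑' h₂, G' (ℓ', h₂)^2) := by
              refine tsum_congr fun ℓ' => ?_
              rw [ENNReal.tsum_mul_right]
              congr 1
              exact (Equiv.subRight ℓ').tsum_eq (fun m => ∑' h₁, F' (m, h₁)^2)
          _ = (∑' p : (Fin d → ℤ) × ℕ, F' p ^ 2) * (∑' p : (Fin d → ℤ) × ℕ, G' p ^ 2) := by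
              rw [ENNReal.tsum_mul_left,
                ENNReal.tsum_prod (f := fun (m : Fin d → ℤ) (h₁ : ℕ) => F' (m, h₁)^2),
                ENNReal.tsum_prod (f := fun (m : Fin d → ℤ) (h₂ : ℕ) => G' (m, h₂)^2)]

end Aux

/-- Tame product estimate for the `s`-decay norm. -/
theorem stmt_11 (d : ℕ) (s₀ s : ℝ) (hs₀ : ((d : ℝ) + 1) / 2 < s₀) (hs : s₀ ≤ s) :
    ∃ C : ℝ, 0 < C ∧
      ∀ A B : (Fin d → ℤ) → ℕ → ℕ → Matrix (Fin 2) (Fin 2) ℂ,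
        sDecayNorm d s (matProd d A B) ≤
          ENNReal.ofReal C *
            (sDecayNorm d s₀ A * sDecayNorm d s B +
              sDecayNorm d s A * sDecayNorm d s₀ B) := by
  have hd0 : (0:ℝ) ≤ (d:ℝ) := Nat.cast_nonneg d
  have h0s₀ : 0 ≤ s₀ := by linarith
  have h0s : 0 ≤ s := le_trans h0s₀ hs
  set K : ℝ≥0∞ := ∑' p : (Fin d → ℤ) × ℕ, ((wE d p) ^ (2*s₀))⁻¹ with hK
  have hKtop : K ≠ ⊤ := by
    rw [hK]
    exact K_ne_top d hs₀
  have h2s : ((2:ℝ≥0∞)^s) ≠ ⊤ := ENNReal.rpow_ne_top_of_nonneg h0s (by norm_num)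
  set D1 : ℝ≥0∞ := ((2:ℝ≥0∞)^s)^2 * (2*K) * 4 * 4 with hD1
  have hD1top : D1 ≠ ⊤ := by
    rw [hD1]
    refine ENNReal.mul_ne_top (ENNReal.mul_ne_top (ENNReal.mul_ne_top ?_ ?_) (by norm_num)) (by norm_num)
    · exact ENNReal.pow_ne_top h2s
    · exact ENNReal.mul_ne_top (by norm_num) hKtop
  set Cval : ℝ≥0∞ := D1 ^ (1/2:ℝ) with hCval
  have hCtop : Cval ≠ ⊤ := ENNReal.rpow_ne_top_of_nonneg (by norm_num) hD1top
  have hCle : Cval ≤ ENNReal.ofReal (Cval.toReal + 1) := by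
    calc Cval = ENNReal.ofReal Cval.toReal := (ENNReal.ofReal_toReal hCtop).symm
      _ ≤ ENNReal.ofReal (Cval.toReal + 1) := ENNReal.ofReal_le_ofReal (by linarith)
  refine ⟨Cval.toReal + 1, by positivity, ?_⟩
  intro A B
  set F : (Fin d → ℤ) × ℕ → ℝ≥0∞ := fun p => wE d p ^ s * supN d A p with hF
  set F0 : (Fin d → ℤ) × ℕ → ℝ≥0∞ := fun p => wE d p ^ s₀ * supN d A p with hF0
  set G : (Fin d → ℤ) × ℕ → ℝ≥0∞ := fun p => wE d p ^ s * supN d B p with hG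
  set G0 : (Fin d → ℤ) × ℕ → ℝ≥0∞ := fun p => wE d p ^ s₀ * supN d B p with hG0
  have hwr : ∀ (r : ℝ), 0 ≤ r → ∀ p : (Fin d → ℤ) × ℕ,
      wE d p ^ r ≠ 0 ∧ wE d p ^ r ≠ ⊤ := by
    intro r hr p
    constructor
    · exact (ENNReal.rpow_pos (lt_of_lt_of_le zero_lt_one (wE_one_le d p)) (wE_ne_top d p)).ne'
    · exact ENNReal.rpow_ne_top_of_nonneg hr (wE_ne_top d p)
  have hbG0 : ∀ p : (Fin d → ℤ) × ℕ, supN d B p = G0 p * (wE d p ^ s₀)⁻¹ := by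
    intro p
    rw [hG0]
    dsimp only
    rw [mul_comm (wE d p ^ s₀) (supN d B p), mul_assoc,
      ENNReal.mul_inv_cancel (hwr s₀ h0s₀ p).1 (hwr s₀ h0s₀ p).2, mul_one]
  have haF0 : ∀ p : (Fin d → ℤ) × ℕ, supN d A p = F0 p * (wE d p ^ s₀)⁻¹ := by
    intro p
    rw [hF0]
    dsimp only
    rw [mul_comm (wE d p ^ s₀) (supN d A p), mul_assoc,
      ENNReal.mul_inv_cancel (hwr s₀ h0s₀ p).1 (hwr s₀ h0s₀ p).2, mul_one]
  have hinvsq : ∀ p : (Fin d → ℤ) × ℕ, ((wE d p ^ s₀)⁻¹)^2 = (wE d p ^ (2*s₀))⁻¹ := by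
    intro p
    rw [← ENNReal.inv_pow, rpow_two_mul]
  -- step 1 : basic block bound for the product
  have h1a : ∀ (ℓ : Fin d → ℤ) (i j : ℕ),
      blockNorm (matProd d A B ℓ i j) ≤
        ∑' q : ℕ × (Fin d → ℤ), supN d A (ℓ - q.2, Nat.dist i q.1) * supN d B (q.2, Nat.dist q.1 j) := by
    intro ℓ i j
    refine le_trans (blockNorm_tsum_le _) (ENNReal.tsum_le_tsum fun q => ?_)
    refine le_trans (blockNorm_mul_le _ _) (mul_le_mul' ?_ ?_)
    · exact le_iSup (fun ij : {q' : ℕ × ℕ // Nat.dist q'.1 q'.2 = Nat.dist i q.1} =>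
        blockNorm (A (ℓ - q.2) ij.1.1 ij.1.2)) ⟨(i, q.1), rfl⟩
    · exact le_iSup (fun ij : {q' : ℕ × ℕ // Nat.dist q'.1 q'.2 = Nat.dist q.1 j} =>
        blockNorm (B q.2 ij.1.1 ij.1.2)) ⟨(q.1, j), rfl⟩
  -- the key pointwise estimate
  have key : ∀ (ℓ : Fin d → ℤ) (i j : ℕ),
      wE d (ℓ, Nat.dist i j) ^ s * blockNorm (matProd d A B ℓ i j) ≤
        (2:ℝ≥0∞)^s * ((2*K)^(1/2:ℝ) *
            (∑' q : ℕ × (Fin d → ℤ),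
              (F (ℓ - q.2, Nat.dist i q.1) * G0 (q.2, Nat.dist q.1 j))^2)^(1/2:ℝ)
          + (2*K)^(1/2:ℝ) *
            (∑' q : ℕ × (Fin d → ℤ),
              (F0 (ℓ - q.2, Nat.dist i q.1) * G (q.2, Nat.dist q.1 j))^2)^(1/2:ℝ)) := by
    intro ℓ i j
    have step2 : wE d (ℓ, Nat.dist i j) ^ s * blockNorm (matProd d A B ℓ i j) ≤
        ∑' q : ℕ × (Fin d → ℤ), wE d (ℓ, Nat.dist i j) ^ s *
          (supN d A (ℓ - q.2, Nat.dist i q.1) * supN d B (q.2, Nat.dist q.1 j)) := by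
      rw [ENNReal.tsum_mul_left]
      exact mul_le_mul_right (h1a ℓ i j) _
    have step3 : ∀ q : ℕ × (Fin d → ℤ),
        wE d (ℓ, Nat.dist i j) ^ s *
          (supN d A (ℓ - q.2, Nat.dist i q.1) * supN d B (q.2, Nat.dist q.1 j)) ≤
        (2:ℝ≥0∞)^s * (F (ℓ - q.2, Nat.dist i q.1) * supN d B (q.2, Nat.dist q.1 j)
          + supN d A (ℓ - q.2, Nat.dist i q.1) * G (q.2, Nat.dist q.1 j)) := by
      intro q
      have tri : wE d (ℓ, Nat.dist i j) ≤
          wE d (ℓ - q.2, Nat.dist i q.1) + wE d (q.2, Nat.dist q.1 j) := by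
        rw [wE, wE, wE, ← Nat.cast_add]
        exact_mod_cast wt_tri ℓ q.2 i q.1 j
      have hr := rpow_add_le2 h0s tri
      calc wE d (ℓ, Nat.dist i j) ^ s *
            (supN d A (ℓ - q.2, Nat.dist i q.1) * supN d B (q.2, Nat.dist q.1 j))
          ≤ ((2:ℝ≥0∞)^s * (wE d (ℓ - q.2, Nat.dist i q.1) ^ s + wE d (q.2, Nat.dist q.1 j) ^ s)) *
            (supN d A (ℓ - q.2, Nat.dist i q.1) * supN d B (q.2, Nat.dist q.1 j)) :=
            mul_le_mul_left hr _
        _ = (2:ℝ≥0∞)^s * (F (ℓ - q.2, Nat.dist i q.1) * supN d B (q.2, Nat.dist q.1 j)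
            + supN d A (ℓ - q.2, Nat.dist i q.1) * G (q.2, Nat.dist q.1 j)) := by
            rw [hF, hG]; dsimp only; ring
    have step4 : wE d (ℓ, Nat.dist i j) ^ s * blockNorm (matProd d A B ℓ i j) ≤
        (2:ℝ≥0∞)^s *
          ((∑' q : ℕ × (Fin d → ℤ), F (ℓ - q.2, Nat.dist i q.1) * supN d B (q.2, Nat.dist q.1 j))
          + ∑' q : ℕ × (Fin d → ℤ), supN d A (ℓ - q.2, Nat.dist i q.1) * G (q.2, Nat.dist q.1 j)) := by
      refine le_trans step2 (le_trans (ENNReal.tsum_le_tsum step3) ?_)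
      rw [ENNReal.tsum_mul_left, ENNReal.tsum_add]
    refine le_trans step4 (mul_le_mul_right (add_le_add ?_ ?_) _)
    · -- first Cauchy-Schwarz
      have rewr : ∀ q : ℕ × (Fin d → ℤ),
          F (ℓ - q.2, Nat.dist i q.1) * supN d B (q.2, Nat.dist q.1 j) =
          (F (ℓ - q.2, Nat.dist i q.1) * G0 (q.2, Nat.dist q.1 j)) *
            ((wE d (q.2, Nat.dist q.1 j) ^ s₀)⁻¹) := by
        intro q
        rw [hbG0 (q.2, Nat.dist q.1 j)]
        ring
      rw [tsum_congr rewr]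
      refine le_trans (tsum_mul_le_sqrt_mul_sqrt _ _) ?_
      rw [mul_comm]
      refine mul_le_mul' ?_ le_rfl
      refine ENNReal.rpow_le_rpow ?_ (by norm_num)
      have : ∀ q : ℕ × (Fin d → ℤ),
          ((wE d (q.2, Nat.dist q.1 j) ^ s₀)⁻¹)^2 = (wE d (q.2, Nat.dist q.1 j) ^ (2*s₀))⁻¹ :=
        fun q => hinvsq _
      rw [tsum_congr this]
      rw [hK]
      exact wsum1 d (2*s₀) j
    · -- second Cauchy-Schwarz
      have rewr : ∀ q : ℕ × (Fin d → ℤ),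
          supN d A (ℓ - q.2, Nat.dist i q.1) * G (q.2, Nat.dist q.1 j) =
          (F0 (ℓ - q.2, Nat.dist i q.1) * G (q.2, Nat.dist q.1 j)) *
            ((wE d (ℓ - q.2, Nat.dist i q.1) ^ s₀)⁻¹) := by
        intro q
        rw [haF0 (ℓ - q.2, Nat.dist i q.1)]
        ring
      rw [tsum_congr rewr]
      refine le_trans (tsum_mul_le_sqrt_mul_sqrt _ _) ?_
      rw [mul_comm]
      refine mul_le_mul' ?_ le_rfl
      refine ENNReal.rpow_le_rpow ?_ (by norm_num)
      have : ∀ q : ℕ × (Fin d → ℤ),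
          ((wE d (ℓ - q.2, Nat.dist i q.1) ^ s₀)⁻¹)^2 = (wE d (ℓ - q.2, Nat.dist i q.1) ^ (2*s₀))⁻¹ :=
        fun q => hinvsq _
      rw [tsum_congr this]
      rw [hK]
      exact wsum2 d (2*s₀) i ℓ
  -- squared pointwise estimate with suprema
  set D0 : ℝ≥0∞ := ((2:ℝ≥0∞)^s)^2 * (2*K) * 4 with hD0
  set Usup : (Fin d → ℤ) × ℕ → ℝ≥0∞ := fun p =>
    ⨆ ij : {q' : ℕ × ℕ // Nat.dist q'.1 q'.2 = p.2},
      ∑' q : ℕ × (Fin d → ℤ),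
        (F (p.1 - q.2, Nat.dist ij.1.1 q.1) * G0 (q.2, Nat.dist q.1 ij.1.2))^2 with hUsup
  set Vsup : (Fin d → ℤ) × ℕ → ℝ≥0∞ := fun p =>
    ⨆ ij : {q' : ℕ × ℕ // Nat.dist q'.1 q'.2 = p.2},
      ∑' q : ℕ × (Fin d → ℤ),
        (F0 (p.1 - q.2, Nat.dist ij.1.1 q.1) * G (q.2, Nat.dist q.1 ij.1.2))^2 with hVsup
  have key2 : ∀ p : (Fin d → ℤ) × ℕ,
      (wE d p ^ s * supN d (matProd d A B) p)^2 ≤ D0 * (Usup p + Vsup p) := by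
    rintro ⟨ℓ, h⟩
    rw [supN, ENNReal.mul_iSup, iSup_sq]
    refine iSup_le ?_
    rintro ⟨⟨i, j⟩, hij⟩
    dsimp only
    have hk := key ℓ i j
    rw [hij] at hk
    set U : ℝ≥0∞ := ∑' q : ℕ × (Fin d → ℤ),
      (F (ℓ - q.2, Nat.dist i q.1) * G0 (q.2, Nat.dist q.1 j))^2 with hU
    set V : ℝ≥0∞ := ∑' q : ℕ × (Fin d → ℤ),
      (F0 (ℓ - q.2, Nat.dist i q.1) * G (q.2, Nat.dist q.1 j))^2 with hV
    have hUle : U ≤ Usup (ℓ, h) := by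
      rw [hUsup]
      exact le_iSup (fun ij : {q' : ℕ × ℕ // Nat.dist q'.1 q'.2 = h} =>
        ∑' q : ℕ × (Fin d → ℤ),
          (F (ℓ - q.2, Nat.dist ij.1.1 q.1) * G0 (q.2, Nat.dist q.1 ij.1.2))^2) ⟨(i, j), hij⟩
    have hVle : V ≤ Vsup (ℓ, h) := by
      rw [hVsup]
      exact le_iSup (fun ij : {q' : ℕ × ℕ // Nat.dist q'.1 q'.2 = h} =>
        ∑' q : ℕ × (Fin d → ℤ),
          (F0 (ℓ - q.2, Nat.dist ij.1.1 q.1) * G (q.2, Nat.dist q.1 ij.1.2))^2) ⟨(i, j), hij⟩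
    calc (wE d (ℓ, h) ^ s * blockNorm (matProd d A B ℓ i j))^2
        ≤ ((2:ℝ≥0∞)^s * ((2*K)^(1/2:ℝ) * U^(1/2:ℝ) + (2*K)^(1/2:ℝ) * V^(1/2:ℝ)))^2 :=
          pow_le_pow_left' hk 2
      _ = ((2:ℝ≥0∞)^s)^2 * (((2*K)^(1/2:ℝ))^2 * (U^(1/2:ℝ) + V^(1/2:ℝ))^2) := by
          rw [← mul_add ((2*K)^(1/2:ℝ))]
          rw [mul_pow, mul_pow]
      _ ≤ ((2:ℝ≥0∞)^s)^2 * ((2*K) * (4 * ((U^(1/2:ℝ))^2 + (V^(1/2:ℝ))^2))) := by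
          rw [rpow_half_sq]
          exact mul_le_mul_right (mul_le_mul_right (addSqLe4 _ _) _) _
      _ = D0 * (U + V) := by
          rw [rpow_half_sq, rpow_half_sq, hD0]; ring
      _ ≤ D0 * (Usup (ℓ, h) + Vsup (ℓ, h)) := mul_le_mul_right (add_le_add hUle hVle) _
  -- sum up
  have main2 : ∑' p : (Fin d → ℤ) × ℕ, (wE d p ^ s * supN d (matProd d A B) p)^2 ≤
      D1 * ((∑' p, (F p)^2) * (∑' p, (G0 p)^2) + (∑' p, (F0 p)^2) * (∑' p, (G p)^2)) := by
    calc ∑' p : (Fin d → ℤ) × ℕ, (wE d p ^ s * supN d (matProd d A B) p)^2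
        ≤ ∑' p : (Fin d → ℤ) × ℕ, D0 * (Usup p + Vsup p) := ENNReal.tsum_le_tsum key2
      _ = D0 * ((∑' p, Usup p) + ∑' p, Vsup p) := by
          rw [ENNReal.tsum_mul_left, ENNReal.tsum_add]
      _ ≤ D0 * ((4 * ((∑' p, (F p)^2) * (∑' p, (G0 p)^2)))
            + 4 * ((∑' p, (F0 p)^2) * (∑' p, (G p)^2))) := by
          refine mul_le_mul_right (add_le_add ?_ ?_) _
          · exact conv_sum_le d F G0
          · exact conv_sum_le d F0 G
      _ = D1 * ((∑' p, (F p)^2) * (∑' p, (G0 p)^2) + (∑' p, (F0 p)^2) * (∑' p, (G p)^2)) := by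
          rw [hD1, hD0]; ring
  -- conclude
  have sqrt_step : sDecayNorm d s (matProd d A B) ≤
      Cval * (((∑' p, (F p)^2) * (∑' p, (G0 p)^2))^(1/2:ℝ)
        + ((∑' p, (F0 p)^2) * (∑' p, (G p)^2))^(1/2:ℝ)) := by
    rw [sDecay_eq]
    calc (∑' p : (Fin d → ℤ) × ℕ, (wE d p ^ s * supN d (matProd d A B) p)^2) ^ (1/2:ℝ)
        ≤ (D1 * ((∑' p, (F p)^2) * (∑' p, (G0 p)^2)
            + (∑' p, (F0 p)^2) * (∑' p, (G p)^2)))^(1/2:ℝ) :=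
          ENNReal.rpow_le_rpow main2 (by norm_num)
      _ = Cval * (((∑' p, (F p)^2) * (∑' p, (G0 p)^2)
            + (∑' p, (F0 p)^2) * (∑' p, (G p)^2)))^(1/2:ℝ) := by
          rw [ENNReal.mul_rpow_of_nonneg _ _ (by norm_num : (0:ℝ) ≤ 1/2), hCval]
      _ ≤ Cval * (((∑' p, (F p)^2) * (∑' p, (G0 p)^2))^(1/2:ℝ)
            + ((∑' p, (F0 p)^2) * (∑' p, (G p)^2))^(1/2:ℝ)) := by
          exact mul_le_mul_right (ENNReal.rpow_add_le_add_rpow _ _ (by norm_num) (by norm_num)) _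
  have idA : ((∑' p, (F p)^2) * (∑' p, (G0 p)^2))^(1/2:ℝ) =
      sDecayNorm d s A * sDecayNorm d s₀ B := by
    rw [hF, hG0]
    rw [sqN_eq d s A, sqN_eq d s₀ B, ← mul_pow, ← ENNReal.rpow_natCast (sDecayNorm d s A * sDecayNorm d s₀ B) 2, ← ENNReal.rpow_mul]
    norm_num
  have idB : ((∑' p, (F0 p)^2) * (∑' p, (G p)^2))^(1/2:ℝ) =
      sDecayNorm d s₀ A * sDecayNorm d s B := by
    rw [hF0, hG]
    rw [sqN_eq d s₀ A, sqN_eq d s B, ← mul_pow, ← ENNReal.rpow_natCast (sDecayNorm d s₀ A * sDecayNorm d s B) 2, ← ENNReal.rpow_mul]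
    norm_num
  rw [idA, idB] at sqrt_step
  refine le_trans sqrt_step ?_
  rw [add_comm (sDecayNorm d s A * sDecayNorm d s₀ B)]
  exact mul_le_mul_left hCle _
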